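/- arXiv:math/0206258 — 6 statements merged into one kernel-verified Lean document; each statement's English description precedes it below -/
import Mathlib

section
/- If Γ is a poly-torsion-free-abelian (PTFA) group, then the rational group algebra ℚΓ has no zero divisors, i.e. MonoidAlgebra ℚ Γ is an integral domain. -/
/-- A torsion-free group with commutative multiplication has `UniqueProds`. -/
theorem uniqueProds_of_comm_torsionfree {Q : Type*} [Group Q]
    (hc : ∀ a b : Q, a * b = b * a)
    (hT : ∀ q : Q, ∀ m : ℤ, 0 < m → q ^ m = 1 → q = 1) : UniqueProds Q := by
  classical
  letI : CommGroup Q := { (inferInstance : Group Q) with mul_comm := hc }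
  constructor
  intro A B hA hB
  set S : Subgroup Q := Subgroup.closure ((A : Set Q) ∪ (B : Set Q)) with hSdef
  -- the subgroup S is torsion-free
  have hStf : ∀ (s : ↥S) (m : ℤ), 0 < m → s ^ m = 1 → s = 1 := by
    intro s m hm h1
    have : (s : Q) ^ m = 1 := by
      have := congrArg (Subtype.val : ↥S → Q) h1
      simpa using this
    exact Subtype.ext (hT _ m hm this)
  haveI : Finite ((A : Set Q) ∪ (B : Set Q) : Set Q) := Set.Finite.union A.finite_toSet B.finite_toSet
  haveI : Group.FG ↥S := Group.closure_finite_fg _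
  haveI : Module.Finite ℤ (Additive ↥S) :=
    Module.Finite.iff_addGroup_fg.mpr (AddGroup.fg_of_group_fg)
  haveI : NoZeroSMulDivisors ℤ (Additive ↥S) := by
    constructor
    intro m x h
    rcases eq_or_ne m 0 with rfl | hm
    · exact Or.inl rfl
    · refine Or.inr ?_
      have hx : x.toMul ^ m = 1 := by
        have := congrArg Additive.toMul h
        simpa [toMul_zsmul] using this
      rcases lt_or_gt_of_ne hm with hneg | hpos
      · have : x.toMul ^ (-m) = 1 := by rw [zpow_neg, hx, inv_one]
        exact hStf x.toMul (-m) (by omega) this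
      · exact hStf x.toMul m hpos hx
  haveI : Module.Free ℤ (Additive ↥S) := Module.free_of_finite_type_torsion_free'
  -- UniqueSums for the additive version of S, via a basis
  haveI hUS : UniqueSums (Additive ↥S) := by
    let b := Module.Free.chooseBasis ℤ (Additive ↥S)
    exact UniqueSums.of_injective_addHom
      ⟨fun x => b.repr x, fun a b' => map_add _ a b'⟩ b.repr.injective inferInstance
  haveI hUP : UniqueProds ↥S :=
    UniqueProds.of_injective_mulHom
      (⟨fun x => x, fun _ _ => rfl⟩ : ↥S →ₙ* Multiplicative (Additive ↥S))
      (fun _ _ h => h) inferInstance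
  -- lift A and B to S
  have hAmem : ∀ a ∈ A, a ∈ S := fun a ha =>
    Subgroup.subset_closure (Set.mem_union_left _ (Finset.mem_coe.mpr ha))
  have hBmem : ∀ b ∈ B, b ∈ S := fun b hb =>
    Subgroup.subset_closure (Set.mem_union_right _ (Finset.mem_coe.mpr hb))
  set A₁ : Finset ↥S := A.attach.image (fun a => ⟨a.1, hAmem a.1 a.2⟩) with hA₁
  set B₁ : Finset ↥S := B.attach.image (fun b => ⟨b.1, hBmem b.1 b.2⟩) with hB₁
  have hA₁ne : A₁.Nonempty := (Finset.attach_nonempty_iff.mpr hA).image _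
  have hB₁ne : B₁.Nonempty := (Finset.attach_nonempty_iff.mpr hB).image _
  obtain ⟨u, hu, v, hv, huv⟩ := hUP.uniqueMul_of_nonempty hA₁ne hB₁ne
  obtain ⟨a₀, _, rfl⟩ := Finset.mem_image.mp hu
  obtain ⟨b₀, _, rfl⟩ := Finset.mem_image.mp hv
  refine ⟨a₀.1, a₀.2, b₀.1, b₀.2, ?_⟩
  intro a b ha hb he
  have hxy :
      (⟨a, hAmem a ha⟩ : ↥S) * ⟨b, hBmem b hb⟩ =
        (⟨a₀.1, hAmem a₀.1 a₀.2⟩ : ↥S) * ⟨b₀.1, hBmem b₀.1 b₀.2⟩ := Subtype.ext he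
  have h1 := huv (Finset.mem_image.mpr ⟨⟨a, ha⟩, A.mem_attach _, rfl⟩)
    (Finset.mem_image.mpr ⟨⟨b, hb⟩, B.mem_attach _, rfl⟩) hxy
  exact ⟨congrArg Subtype.val h1.1, congrArg Subtype.val h1.2⟩

/-- `UniqueProds` is closed under group extensions. -/
theorem uniqueProds_extension {G : Type*} [Group G] (N : Subgroup G) [hNn : N.Normal]
    (hN : UniqueProds ↥N) (hQ : UniqueProds (G ⧸ N)) : UniqueProds G := by
  classical
  constructor
  intro A B hA hB
  set f : G →* G ⧸ N := QuotientGroup.mk' N with hf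
  obtain ⟨q, hq, r, hr, hqr⟩ := hQ.uniqueMul_of_nonempty (hA.image f) (hB.image f)
  obtain ⟨a₀, ha₀, rfl⟩ := Finset.mem_image.mp hq
  obtain ⟨b₀, hb₀, rfl⟩ := Finset.mem_image.mp hr
  set A' : Finset G := A.filter (fun a => f a = f a₀) with hA'
  set B' : Finset G := B.filter (fun b => f b = f b₀) with hB'
  have hmemA : ∀ a ∈ A', a₀⁻¹ * a ∈ N := by
    intro a ha
    have h2 := (Finset.mem_filter.mp ha).2
    exact (QuotientGroup.eq).mp h2.symm
  have hmemB : ∀ b ∈ B', b * b₀⁻¹ ∈ N := by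
    intro b hb
    have h2 := (Finset.mem_filter.mp hb).2
    have h3 : b₀⁻¹ * b ∈ N := (QuotientGroup.eq).mp h2.symm
    have h4 := hNn.conj_mem _ h3 b₀
    have : b₀ * (b₀⁻¹ * b) * b₀⁻¹ = b * b₀⁻¹ := by group
    rwa [this] at h4
  set XA : Finset ↥N := A'.attach.image (fun a => ⟨a₀⁻¹ * a.1, hmemA a.1 a.2⟩) with hXA
  set XB : Finset ↥N := B'.attach.image (fun b => ⟨b.1 * b₀⁻¹, hmemB b.1 b.2⟩) with hXB
  have hA'ne : A'.Nonempty := ⟨a₀, Finset.mem_filter.mpr ⟨ha₀, rfl⟩⟩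
  have hB'ne : B'.Nonempty := ⟨b₀, Finset.mem_filter.mpr ⟨hb₀, rfl⟩⟩
  obtain ⟨x, hx, y, hy, hxy⟩ := hN.uniqueMul_of_nonempty
    ((Finset.attach_nonempty_iff.mpr hA'ne).image _)
    ((Finset.attach_nonempty_iff.mpr hB'ne).image _)
  obtain ⟨a₁, _, rfl⟩ := Finset.mem_image.mp hx
  obtain ⟨b₁, _, rfl⟩ := Finset.mem_image.mp hy
  have ha₁A : a₁.1 ∈ A := (Finset.mem_filter.mp a₁.2).1
  have hb₁B : b₁.1 ∈ B := (Finset.mem_filter.mp b₁.2).1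
  have hfa₁ : f a₁.1 = f a₀ := (Finset.mem_filter.mp a₁.2).2
  have hfb₁ : f b₁.1 = f b₀ := (Finset.mem_filter.mp b₁.2).2
  refine ⟨a₁.1, ha₁A, b₁.1, hb₁B, ?_⟩
  intro a b ha hb he
  -- first, a and b lie in the right cosets
  have hfev : f a * f b = f a₀ * f b₀ := by
    rw [← map_mul, he, map_mul, hfa₁, hfb₁]
  have hcoset := hqr (Finset.mem_image_of_mem f ha) (Finset.mem_image_of_mem f hb) hfev
  have haA' : a ∈ A' := Finset.mem_filter.mpr ⟨ha, hcoset.1⟩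
  have hbB' : b ∈ B' := Finset.mem_filter.mpr ⟨hb, hcoset.2⟩
  -- now apply uniqueness in N
  have hkey : (⟨a₀⁻¹ * a, hmemA a haA'⟩ : ↥N) * ⟨b * b₀⁻¹, hmemB b hbB'⟩ =
      (⟨a₀⁻¹ * a₁.1, hmemA a₁.1 a₁.2⟩ : ↥N) * ⟨b₁.1 * b₀⁻¹, hmemB b₁.1 b₁.2⟩ := by
    apply Subtype.ext
    show a₀⁻¹ * a * (b * b₀⁻¹) = a₀⁻¹ * a₁.1 * (b₁.1 * b₀⁻¹)
    have : a₀⁻¹ * (a * b) * b₀⁻¹ = a₀⁻¹ * (a₁.1 * b₁.1) * b₀⁻¹ := by rw [he]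
    calc a₀⁻¹ * a * (b * b₀⁻¹) = a₀⁻¹ * (a * b) * b₀⁻¹ := by group
      _ = a₀⁻¹ * (a₁.1 * b₁.1) * b₀⁻¹ := this
      _ = a₀⁻¹ * a₁.1 * (b₁.1 * b₀⁻¹) := by group
  have hxmem : (⟨a₀⁻¹ * a, hmemA a haA'⟩ : ↥N) ∈ XA :=
    Finset.mem_image.mpr ⟨⟨a, haA'⟩, A'.mem_attach _, rfl⟩
  have hymem : (⟨b * b₀⁻¹, hmemB b hbB'⟩ : ↥N) ∈ XB :=
    Finset.mem_image.mpr ⟨⟨b, hbB'⟩, B'.mem_attach _, rfl⟩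
  have h1 := hxy hxmem hymem hkey
  have h1a : a₀⁻¹ * a = a₀⁻¹ * a₁.1 := congrArg Subtype.val h1.1
  have h1b : b * b₀⁻¹ = b₁.1 * b₀⁻¹ := congrArg Subtype.val h1.2
  exact ⟨mul_left_cancel h1a, mul_right_cancel h1b⟩

open scoped commutatorElement

/-- A group `Γ` is poly-torsion-free-abelian (PTFA) if it admits a finite chain of subgroups
`⊥ = H n ≤ … ≤ H 0 = Γ`, each normal in `Γ`, such that each factor `H i / H (i+1)` is
torsion-free abelian. -/
def IsPTFA (Γ : Type*) [Group Γ] : Prop :=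
  ∃ (n : ℕ) (H : ℕ → Subgroup Γ),
    H 0 = ⊤ ∧ H n = ⊥ ∧
    (∀ i < n, H (i + 1) ≤ H i) ∧
    (∀ i ≤ n, (H i).Normal) ∧
    (∀ i < n, ∀ x ∈ H i, ∀ y ∈ H i, ⁅x, y⁆ ∈ H (i + 1)) ∧
    (∀ i < n, ∀ x ∈ H i, ∀ m : ℤ, 0 < m → x ^ m ∈ H (i + 1) → x ∈ H (i + 1))

theorem uniqueProds_of_isPTFA {Γ : Type*} [Group Γ] (hΓ : IsPTFA Γ) : UniqueProds Γ := by
  obtain ⟨n, H, h0, hn, _hle, hnorm, hcomm, htf⟩ := hΓ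
  have key : ∀ j, j ≤ n → UniqueProds ↥(H (n - j)) := by
    intro j
    induction j with
    | zero =>
      intro _
      have e : H (n - 0) = ⊥ := by rw [Nat.sub_zero, hn]
      rw [e]
      haveI : Subsingleton ↥(⊥ : Subgroup Γ) :=
        ⟨fun a b => Subtype.ext (by rw [(Subgroup.mem_bot).mp a.2, (Subgroup.mem_bot).mp b.2])⟩
      exact ⟨fun hA hB => ⟨hA.choose, hA.choose_spec, hB.choose, hB.choose_spec,
        UniqueMul.of_subsingleton⟩⟩
    | succ j ih =>
      intro hj
      have hrw : n - j = (n - (j + 1)) + 1 := by omega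
      set i := n - (j + 1) with hi
      have hin : i < n := by omega
      have IH : UniqueProds ↥(H (i + 1)) := by rw [← hrw]; exact ih (by omega)
      haveI : (H i).Normal := hnorm i (by omega)
      set N : Subgroup ↥(H i) := (H (i + 1)).subgroupOf (H i) with hN
      haveI hNnorm : N.Normal := (hnorm (i + 1) (by omega)).subgroupOf _
      have hNup : UniqueProds ↥N := by
        refine UniqueProds.of_injective_mulHom
          (⟨fun x => ⟨x.1.1, Subgroup.mem_subgroupOf.mp x.2⟩, fun a b => rfl⟩ :
            ↥N →ₙ* ↥(H (i + 1))) ?_ IH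
        intro a b h
        simp only [MulHom.coe_mk, Subtype.mk.injEq] at h
        exact Subtype.ext (Subtype.ext h)
      have hQup : UniqueProds (↥(H i) ⧸ N) := by
        apply uniqueProds_of_comm_torsionfree
        · intro a b
          induction a using QuotientGroup.induction_on with
          | H x =>
          induction b using QuotientGroup.induction_on with
          | H y =>
          rw [← QuotientGroup.mk_mul, ← QuotientGroup.mk_mul, QuotientGroup.eq]
          have hcm := hcomm i hin (↑y)⁻¹ (inv_mem y.2) (↑x)⁻¹ (inv_mem x.2)
          rw [commutatorElement_def, inv_inv, inv_inv] at hcm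
          rw [Subgroup.mem_subgroupOf]
          have hcoe : ((((x * y)⁻¹ * (y * x)) : ↥(H i)) : Γ)
              = (↑y)⁻¹ * (↑x)⁻¹ * ↑y * ↑x := by
            push_cast
            group
          rw [hcoe]
          exact hcm
        · intro q m hm h1
          induction q using QuotientGroup.induction_on with
          | H x =>
          rw [← QuotientGroup.mk_zpow, QuotientGroup.eq_one_iff] at h1
          rw [QuotientGroup.eq_one_iff, Subgroup.mem_subgroupOf]
          have hxm : ((x : Γ)) ^ m ∈ H (i + 1) := by
            have := Subgroup.mem_subgroupOf.mp h1
            rwa [SubgroupClass.coe_zpow] at this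
          exact htf i hin (↑x) x.2 m hm hxm
      exact uniqueProds_extension N hNup hQup
  have htop := key n le_rfl
  rw [Nat.sub_self] at htop
  rw [h0] at htop
  exact (Subgroup.topEquiv.uniqueProds_iff).mp htop

/-- If `Γ` is PTFA then the rational group algebra `ℚΓ` has no zero divisors, i.e. it is an
integral domain. -/
theorem isDomain_monoidAlgebra_rat_of_isPTFA (Γ : Type*) [Group Γ] (hΓ : IsPTFA Γ) :
    IsDomain (MonoidAlgebra ℚ Γ) := by
  haveI := uniqueProds_of_isPTFA hΓ
  exact NoZeroDivisors.to_isDomain _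
end

section
/- Let K be a division ring. Then the Laurent polynomial ring K[t, t⁻¹] (the group algebra of the infinite cyclic group over K, i.e. AddMonoidAlgebra K ℤ) is a principal ideal domain on both sides: every left ideal of K[t, t⁻¹] is principal, and every right ideal of K[t, t⁻¹] is principal. -/
open Finsupp AddMonoidAlgebra

namespace LaurentPID

noncomputable abbrev wdt {K : Type*} [DivisionRing K] (f : AddMonoidAlgebra K ℤ) : ℕ :=
  ((WithBot.unbotD 0 f.coeff.support.max) - (WithTop.untopD 0 f.coeff.support.min)).toNat

theorem wdt_eq {K : Type*} [DivisionRing K] (f : AddMonoidAlgebra K ℤ)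
    (hf : f.coeff.support.Nonempty) : wdt f = (f.coeff.support.max' hf - f.coeff.support.min' hf).toNat := by
  rw [wdt, ← Finset.coe_max' hf, ← Finset.coe_min' hf, WithBot.unbotD_coe, WithTop.untopD_coe]

theorem main (K : Type*) [DivisionRing K] (I : Ideal (AddMonoidAlgebra K ℤ)) :
    I.IsPrincipal := by
  classical
  by_cases hbot : I = ⊥
  · exact ⟨0, by simp [hbot, Ideal.span_singleton_eq_bot.2 rfl]⟩
  obtain ⟨f0, hf0I, hf00⟩ : ∃ f ∈ I, f ≠ 0 := by
    by_contra h
    push_neg at h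
    exact hbot (le_antisymm (fun x hx => by simpa using h x hx) bot_le)
  have hP : ∃ w : ℕ, ∃ f, f ∈ I ∧ f ≠ 0 ∧ wdt f = w := ⟨wdt f0, f0, hf0I, hf00, rfl⟩
  obtain ⟨d, hdI, hd0, hdw⟩ := Nat.find_spec hP
  have hmin : ∀ f ∈ I, f ≠ 0 → wdt d ≤ wdt f := by
    intro f hf hf0
    rw [hdw]
    exact Nat.find_le ⟨f, hf, hf0, rfl⟩
  refine ⟨d, le_antisymm ?_ ((Ideal.span_singleton_le_iff_mem I).2 hdI)⟩
  intro g hg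
  obtain ⟨w, hw⟩ : ∃ w, wdt g = w := ⟨_, rfl⟩
  induction w using Nat.strong_induction_on generalizing g with
  | _ w IH =>
  by_cases hg0 : g = 0
  · simp [hg0]
  have hgs : g.coeff.support.Nonempty := Finsupp.support_nonempty_iff.2 (mt AddMonoidAlgebra.coeff_eq_zero.1 hg0)
  have hds : d.coeff.support.Nonempty := Finsupp.support_nonempty_iff.2 (mt AddMonoidAlgebra.coeff_eq_zero.1 hd0)
  set n := g.coeff.support.max' hgs with hn
  set m := g.coeff.support.min' hgs with hm
  set N := d.coeff.support.max' hds with hN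
  set M := d.coeff.support.min' hds with hM
  have hwg : wdt g = (n - m).toNat := wdt_eq g hgs
  have hwd : wdt d = (N - M).toNat := wdt_eq d hds
  have hmn : m ≤ n := Finset.min'_le _ _ (g.coeff.support.max'_mem hgs)
  have hMN : M ≤ N := Finset.min'_le _ _ (d.coeff.support.max'_mem hds)
  have hkey : N - M ≤ n - m := by
    have := hmin g hg hg0
    rw [hwd, hwg] at this
    omega
  have hgn : g.coeff n ≠ 0 := Finsupp.mem_support_iff.1 (g.coeff.support.max'_mem hgs)
  have hdN : d.coeff N ≠ 0 := Finsupp.mem_support_iff.1 (d.coeff.support.max'_mem hds)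
  set a : ℤ := n - N with ha
  set c : K := g.coeff n * (d.coeff N)⁻¹ with hc
  set r : AddMonoidAlgebra K ℤ := g - AddMonoidAlgebra.single a c * d with hr
  have hr_apply : ∀ y, r.coeff y = g.coeff y - c * d.coeff (y - a) := by
    intro y
    rw [hr, AddMonoidAlgebra.coeff_sub, Finsupp.sub_apply, AddMonoidAlgebra.coeff_single_mul_apply]
    ring_nf
  have hrI : r ∈ I := I.sub_mem hg (I.mul_mem_left _ hdI)
  have hrn : r.coeff n = 0 := by
    rw [hr_apply, show n - a = N by omega, hc, mul_assoc, inv_mul_cancel₀ hdN, mul_one, sub_self]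
  have hb : ∀ y ∈ r.coeff.support, m ≤ y ∧ y < n := by
    intro y hy
    have hy' : r.coeff y ≠ 0 := Finsupp.mem_support_iff.1 hy
    have hyn : y ≠ n := fun h => hy' (h ▸ hrn)
    rw [hr_apply] at hy'
    have hcases : g.coeff y ≠ 0 ∨ d.coeff (y - a) ≠ 0 := by
      by_contra h
      push_neg at h
      rw [h.1, h.2, mul_zero, sub_zero] at hy'
      exact hy' rfl
    rcases hcases with h | h
    · have hmem := Finsupp.mem_support_iff.2 h
      have h1 := Finset.le_max' _ _ hmem
      have h2 := Finset.min'_le _ _ hmem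
      exact ⟨h2, lt_of_le_of_ne h1 hyn⟩
    · have hmem := Finsupp.mem_support_iff.2 h
      have h1 := Finset.le_max' _ _ hmem
      have h2 := Finset.min'_le _ _ hmem
      constructor
      · omega
      · refine lt_of_le_of_ne ?_ hyn
        omega
  have hsd : AddMonoidAlgebra.single a c * d ∈ Ideal.span {d} :=
    Ideal.mul_mem_left _ _ (Ideal.subset_span rfl)
  by_cases hr0 : r = 0
  · have : g = AddMonoidAlgebra.single a c * d := by
      rwa [hr, sub_eq_zero] at hr0
    rw [this]
    exact hsd
  · have hrs : r.coeff.support.Nonempty := Finsupp.support_nonempty_iff.2 (mt AddMonoidAlgebra.coeff_eq_zero.1 hr0)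
    have h1 : r.coeff.support.max' hrs < n := (hb _ (r.coeff.support.max'_mem hrs)).2
    have h2 : m ≤ r.coeff.support.min' hrs := (hb _ (r.coeff.support.min'_mem hrs)).1
    have h3 : r.coeff.support.min' hrs ≤ r.coeff.support.max' hrs :=
      Finset.min'_le _ _ (r.coeff.support.max'_mem hrs)
    have hwr : wdt r = (r.coeff.support.max' hrs - r.coeff.support.min' hrs).toNat := wdt_eq r hrs
    have hlt : wdt r < w := by
      rw [hwg] at hw
      omega
    have hrspan := IH _ hlt hrI rfl
    have : g = r + AddMonoidAlgebra.single a c * d := by rw [hr, sub_add_cancel]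
    rw [this]
    exact Submodule.add_mem _ hrspan hsd

end LaurentPID

/-- The Laurent polynomial ring `K[t, t⁻¹]` over a division ring `K` (the group algebra of the
infinite cyclic group over `K`) is a left and right principal ideal domain: every left ideal
and every right ideal is principal. -/
theorem laurent_over_divisionRing_left_right_pid (K : Type*) [DivisionRing K] :
    (∀ I : Ideal (AddMonoidAlgebra K ℤ), I.IsPrincipal) ∧
    (∀ I : Ideal (AddMonoidAlgebra K ℤ)ᵐᵒᵖ, I.IsPrincipal) := by
  refine ⟨fun I => LaurentPID.main K I, fun I => ?_⟩
  let e : (AddMonoidAlgebra K ℤ)ᵐᵒᵖ ≃+* AddMonoidAlgebra Kᵐᵒᵖ ℤ :=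
    AddMonoidAlgebra.opRingEquiv.trans
      (AddMonoidAlgebra.mapDomainRingEquiv Kᵐᵒᵖ AddOpposite.opAddEquiv.symm)
  obtain ⟨a, ha⟩ := LaurentPID.main Kᵐᵒᵖ (Ideal.map (e : _ →+* _) I)
  refine ⟨e.symm a, ?_⟩
  have h1 : Ideal.map (e.symm : AddMonoidAlgebra Kᵐᵒᵖ ℤ →+* (AddMonoidAlgebra K ℤ)ᵐᵒᵖ)
      (Ideal.map (e : (AddMonoidAlgebra K ℤ)ᵐᵒᵖ →+* AddMonoidAlgebra Kᵐᵒᵖ ℤ) I) = I := by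
    rw [Ideal.map_map]
    simp
  have h2 : Ideal.map (e.symm : AddMonoidAlgebra Kᵐᵒᵖ ℤ →+* (AddMonoidAlgebra K ℤ)ᵐᵒᵖ)
      (Ideal.span {a}) = Ideal.span {e.symm a} := by
    rw [Ideal.map_span, Set.image_singleton]
    rfl
  rw [← h1, ha]
  exact h2
end

section
/- Let E be a group, k a natural number, t ∈ E, and β an element of the k-th derived subgroup E^{(k)}. Suppose w, η ∈ E satisfy w = ⁅t⁻¹, η⁆ and η = t * ⁅β, w⁆ * t⁻¹. Then both w and η lie in the (k+1)-st derived subgroup E^{(k+1)}. -/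
open scoped commutatorElement

theorem derivedSeries_antitone' {E : Type*} [Group E] {j k : ℕ} (h : j ≤ k) :
    derivedSeries E k ≤ derivedSeries E j := by
  induction k with
  | zero => simp_all
  | succ n ih =>
    rcases Nat.lt_or_ge j (n+1) with h' | h'
    · haveI := derivedSeries_normal E n
      exact le_trans (by rw [derivedSeries_succ]; exact Subgroup.commutator_le_left _ _)
        (ih (Nat.lt_succ_iff.mp h'))
    · have : j = n + 1 := le_antisymm h h'
      subst this; exact le_rfl

/-- If `β ∈ E⁽ᵏ⁾`, `w = ⁅t⁻¹, η⁆` and `η = t * ⁅β, w⁆ * t⁻¹`, then both `w` and `η` lie in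
`E⁽ᵏ⁺¹⁾`. -/
theorem mem_derivedSeries_succ_of_commutator_relations {E : Type*} [Group E] (k : ℕ)
    (t β w η : E) (hβ : β ∈ derivedSeries E k)
    (hw : w = ⁅t⁻¹, η⁆) (hη : η = t * ⁅β, w⁆ * t⁻¹) :
    w ∈ derivedSeries E (k + 1) ∧ η ∈ derivedSeries E (k + 1) := by
  -- w = ⁅β,w⁆ * t * ⁅β,w⁆⁻¹ * t⁻¹
  have key : w = ⁅β, w⁆ * (t * ⁅β, w⁆⁻¹ * t⁻¹) := by
    conv_lhs => rw [hw, hη]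
    group
  have main : ∀ j, j ≤ k + 1 → w ∈ derivedSeries E j := by
    intro j hj
    induction j with
    | zero => simp [derivedSeries_zero]
    | succ n ih =>
      have hn : n ≤ k := Nat.lt_succ_iff.mp hj
      have hwn : w ∈ derivedSeries E n := ih (le_trans hn (Nat.le_succ k))
      have hβn : β ∈ derivedSeries E n := derivedSeries_antitone' hn hβ
      have hc : ⁅β, w⁆ ∈ derivedSeries E (n + 1) := by
        rw [derivedSeries_succ]
        exact Subgroup.commutator_mem_commutator hβn hwn
      have hnorm := derivedSeries_normal E (n + 1)
      rw [key]
      exact mul_mem hc (by simpa using hnorm.conj_mem _ (inv_mem hc) t)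
  have hwk1 : w ∈ derivedSeries E (k + 1) := main _ le_rfl
  have hc : ⁅β, w⁆ ∈ derivedSeries E (k + 1) := by
    rw [derivedSeries_succ]
    exact Subgroup.commutator_mem_commutator hβ (main k (Nat.le_succ k))
  refine ⟨hwk1, ?_⟩
  rw [hη]
  simpa using (derivedSeries_normal E (k + 1)).conj_mem _ hc t
end

section
/- Let P be a group, k a natural number, t ∈ P, and α an element of the k-th derived subgroup P^{(k)}. Let Q be the free product (coproduct) of P with the free group on one generator z, let η = t * ⁅α⁻¹, t⁻¹ * z⁆ * t⁻¹ ∈ Q (identifying P and z with their images in Q), and let E be the quotient of Q by the normal closure of the single element z⁻¹ * η * t * η⁻¹. Then the homomorphism E → P determined by the identity on P and z ↦ t is a well-defined surjective homomorphism which induces a group isomorphism E/E^{(n)} ≅ P/P^{(n)} for every n ≤ k + 1. -/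
open Monoid
open scoped commutatorElement

/-- Each term of the derived series is a normal subgroup. -/
instance derivedSeries_normal_inst (G : Type*) [Group G] (n : ℕ) :
    (derivedSeries G n).Normal :=
  derivedSeries_normal G n

variable {P : Type*} [Group P]

/-- The generator `z` of the free factor, inside the free product `P ∗ F(z)`. -/
def knotGenZ (P : Type*) [Group P] : Coprod P (FreeGroup Unit) :=
  Coprod.inr (FreeGroup.of ())

/-- The word `η = t ⁅α⁻¹, t⁻¹ z⁆ t⁻¹` in the free product `P ∗ F(z)`. -/
def knotEta (t α : P) : Coprod P (FreeGroup Unit) :=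
  Coprod.inl t *
    ⁅(Coprod.inl α : Coprod P (FreeGroup Unit))⁻¹,
      (Coprod.inl t : Coprod P (FreeGroup Unit))⁻¹ * knotGenZ P⁆ *
    (Coprod.inl t : Coprod P (FreeGroup Unit))⁻¹

/-- The normal closure of the single relator `z⁻¹ η t η⁻¹`. -/
abbrev knotRelation (t α : P) : Subgroup (Coprod P (FreeGroup Unit)) :=
  Subgroup.normalClosure {(knotGenZ P)⁻¹ * knotEta t α * Coprod.inl t * (knotEta t α)⁻¹}

/-- The group `E = ⟨P, z ∣ z = η t η⁻¹⟩`. -/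
abbrev KnotE (t α : P) : Type _ :=
  Coprod P (FreeGroup Unit) ⧸ knotRelation t α

private lemma derivedSeries_antitone'_s11 {G : Type*} [Group G] :
    ∀ {m n : ℕ}, m ≤ n → derivedSeries G n ≤ derivedSeries G m := by
  intro m n h
  induction n with
  | zero => simp_all
  | succ n ih =>
    rcases Nat.lt_or_ge m (n+1) with h' | h'
    · exact le_trans (derivedSeries_succ G n ▸
        Subgroup.commutator_le_left _ _) (ih (Nat.lt_succ_iff.mp h'))
    · have : m = n + 1 := le_antisymm h h'
      subst this; exact le_rfl

/-- If `α ∈ P⁽ᵏ⁾`, the homomorphism `E → P` determined by the identity on `P` and `z ↦ t` is a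
well-defined surjection inducing isomorphisms `E/E⁽ⁿ⁾ ≅ P/P⁽ⁿ⁾` for all `n ≤ k + 1`. -/
theorem knotE_derived_quotients_iso (k : ℕ) (t α : P) (hα : α ∈ derivedSeries P k) :
    ∃ φ : KnotE t α →* P,
      (∀ p : P, φ (QuotientGroup.mk (Coprod.inl p)) = p) ∧
      φ (QuotientGroup.mk (knotGenZ P)) = t ∧
      Function.Surjective φ ∧
      ∀ n ≤ k + 1,
        Function.Bijective
          (QuotientGroup.map (derivedSeries (KnotE t α) n) (derivedSeries P n) φ
            (Subgroup.map_le_iff_le_comap.mp (map_derivedSeries_le_derivedSeries φ n))) := by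
  classical
  set φ₀ : Coprod P (FreeGroup Unit) →* P :=
    Coprod.lift (MonoidHom.id P) (FreeGroup.lift fun _ => t) with hφ₀
  have hz : φ₀ (knotGenZ P) = t := by simp [knotGenZ, hφ₀]
  have hinl : ∀ p : P, φ₀ (Coprod.inl p) = p := fun p => by simp [hφ₀]
  have hη : φ₀ (knotEta t α) = 1 := by
    simp [knotEta, commutatorElement_def, hz, hinl]
  have hrelker : knotRelation t α ≤ φ₀.ker := by
    refine Subgroup.normalClosure_le_normal ?_
    rintro x hx
    simp only [Set.mem_singleton_iff] at hx
    subst hx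
    simp [MonoidHom.mem_ker, hη, hz, hinl]
  set φ : KnotE t α →* P := QuotientGroup.lift _ φ₀ hrelker with hφ
  have hφinl : ∀ p : P, φ (QuotientGroup.mk (Coprod.inl p)) = p := fun p => by
    simp [hφ, hinl]
  have hφz : φ (QuotientGroup.mk (knotGenZ P)) = t := by simp [hφ, hz]
  have hφsurj : Function.Surjective φ := fun p => ⟨QuotientGroup.mk (Coprod.inl p), hφinl p⟩
  -- the section P →* E
  set ψ : P →* KnotE t α := (QuotientGroup.mk' (knotRelation t α)).comp Coprod.inl with hψ
  have hψ_apply : ∀ p : P, ψ p = QuotientGroup.mk (Coprod.inl p) := fun p => rfl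
  -- names for the images of t, α, z in E
  set tE : KnotE t α := QuotientGroup.mk (Coprod.inl t) with htE
  set aE : KnotE t α := QuotientGroup.mk (Coprod.inl α) with haE
  set zE : KnotE t α := QuotientGroup.mk (knotGenZ P) with hzE
  set c : KnotE t α := ⁅aE⁻¹, tE⁻¹ * zE⁆ with hc
  -- the relation in E
  have hrel1 : zE⁻¹ * (tE * c * tE⁻¹) * tE * (tE * c * tE⁻¹)⁻¹ = 1 := by
    have h : ((QuotientGroup.mk ((knotGenZ P)⁻¹ * knotEta t α * Coprod.inl t *
        (knotEta t α)⁻¹) : KnotE t α)) = 1 :=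
      (QuotientGroup.eq_one_iff _).mpr (Subgroup.subset_normalClosure rfl)
    calc zE⁻¹ * (tE * c * tE⁻¹) * tE * (tE * c * tE⁻¹)⁻¹
        = (QuotientGroup.mk ((knotGenZ P)⁻¹ * knotEta t α * Coprod.inl t *
            (knotEta t α)⁻¹) : KnotE t α) := by
          simp [knotEta, commutatorElement_def, hc, htE, haE, hzE, QuotientGroup.mk_mul,
            QuotientGroup.mk_inv, mul_assoc]
      _ = 1 := h
  have hzeq : zE = tE * c * tE * c⁻¹ * tE⁻¹ := by
    rw [← mul_inv_eq_one]
    have h2 : zE * (tE * c * tE * c⁻¹ * tE⁻¹)⁻¹ =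
        zE * (zE⁻¹ * (tE * c * tE⁻¹) * tE * (tE * c * tE⁻¹)⁻¹)⁻¹ * zE⁻¹ := by
      group
    rw [h2, hrel1]
    group
  have key : tE⁻¹ * zE = ⁅c, tE⁆ := by
    rw [hzeq, commutatorElement_def]
    group
  have haEk : aE ∈ derivedSeries (KnotE t α) k :=
    map_derivedSeries_le_derivedSeries ψ k ⟨α, hα, rfl⟩
  -- key membership
  have umem : ∀ n ≤ k + 1, tE⁻¹ * zE ∈ derivedSeries (KnotE t α) n := by
    intro n hn
    induction n with
    | zero => rw [derivedSeries_zero]; exact Subgroup.mem_top _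
    | succ n ih =>
      have hn' : n ≤ k := Nat.lt_succ_iff.mp hn
      have hu : tE⁻¹ * zE ∈ derivedSeries (KnotE t α) n := ih (le_trans hn' (Nat.le_succ k))
      have ha : aE ∈ derivedSeries (KnotE t α) n := derivedSeries_antitone'_s11 hn' haEk
      have hcmem : c ∈ derivedSeries (KnotE t α) (n + 1) := by
        rw [derivedSeries_succ]
        exact Subgroup.commutator_mem_commutator (inv_mem ha) hu
      have hrw : ⁅c, tE⁆ = c * (tE * c⁻¹ * tE⁻¹) := by
        rw [commutatorElement_def]; group
      rw [key, hrw]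
      exact mul_mem hcmem
        ((derivedSeries_normal_inst _ (n+1)).conj_mem _ (inv_mem hcmem) tE)
  -- agreement of ψ ∘ φ with the identity modulo each derived subgroup
  have agree : ∀ n ≤ k + 1, ∀ x : KnotE t α,
      (QuotientGroup.mk' (derivedSeries (KnotE t α) n)) (ψ (φ x)) =
        QuotientGroup.mk' (derivedSeries (KnotE t α) n) x := by
    intro n hn
    have : ((QuotientGroup.mk' (derivedSeries (KnotE t α) n)).comp (ψ.comp φ)) =
        QuotientGroup.mk' (derivedSeries (KnotE t α) n) := by
      refine QuotientGroup.monoidHom_ext _ ?_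
      refine Coprod.hom_ext ?_ ?_
      · ext p
        simp [hψ_apply, hφinl]
      · refine FreeGroup.ext_hom _ _ ?_
        rintro ⟨⟩
        show (QuotientGroup.mk' (derivedSeries (KnotE t α) n)) (ψ (φ zE)) =
          QuotientGroup.mk' (derivedSeries (KnotE t α) n) zE
        rw [hφz, hψ_apply, ← htE]
        have h1 : QuotientGroup.mk' (derivedSeries (KnotE t α) n) (tE⁻¹ * zE) = 1 :=
          (QuotientGroup.eq_one_iff _).mpr (umem n hn)
        have h2 : zE = tE * (tE⁻¹ * zE) := by group
        rw [h2, map_mul, h1, mul_one]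
    exact fun x => DFunLike.congr_fun this x
  refine ⟨φ, hφinl, hφz, hφsurj, ?_⟩
  intro n hn
  constructor
  · -- injectivity
    have : ∀ e : KnotE t α ⧸ derivedSeries (KnotE t α) n,
        QuotientGroup.map (derivedSeries (KnotE t α) n) (derivedSeries P n) φ
          (Subgroup.map_le_iff_le_comap.mp (map_derivedSeries_le_derivedSeries φ n)) e = 1 →
        e = 1 := by
      intro e he
      induction e using QuotientGroup.induction_on with
      | H x =>
        rw [QuotientGroup.map_mk, QuotientGroup.eq_one_iff] at he
        rw [QuotientGroup.eq_one_iff]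
        have hx : ψ (φ x) ∈ derivedSeries (KnotE t α) n :=
          map_derivedSeries_le_derivedSeries ψ n ⟨φ x, he, rfl⟩
        have := agree n hn x
        rw [QuotientGroup.mk'_apply, QuotientGroup.mk'_apply,
          (QuotientGroup.eq_one_iff _).mpr hx] at this
        rw [← QuotientGroup.eq_one_iff, ← this]
    intro x y hxy
    have h1 : QuotientGroup.map (derivedSeries (KnotE t α) n) (derivedSeries P n) φ
        (Subgroup.map_le_iff_le_comap.mp (map_derivedSeries_le_derivedSeries φ n))
          (x * y⁻¹) = 1 := by
      rw [map_mul, map_inv, hxy, mul_inv_cancel]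
    exact mul_inv_eq_one.mp (this _ h1)
  · -- surjectivity
    intro y
    induction y using QuotientGroup.induction_on with
    | H p =>
      exact ⟨QuotientGroup.mk (QuotientGroup.mk (Coprod.inl p)),
        by rw [QuotientGroup.map_mk, hφinl]⟩
end

section
/- Let G be a group, k a natural number, and b an element of the k-th derived subgroup G^{(k)}. Suppose γ, ℓ ∈ G and a, g ∈ G satisfy γ = ⁅a, ℓ⁆ and ℓ = ⁅g * γ * g⁻¹, b⁆. Then γ lies in the (k+1)-st derived subgroup G^{(k+1)}. -/
open scoped commutatorElement

/-- If `b ∈ G⁽ᵏ⁾`, `γ = ⁅a, ℓ⁆` and `ℓ = ⁅g γ g⁻¹, b⁆`, then `γ ∈ G⁽ᵏ⁺¹⁾`. -/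
theorem mem_derivedSeries_succ_of_longitude_relations {G : Type*} [Group G] (k : ℕ)
    (b γ ℓ a g : G) (hb : b ∈ derivedSeries G k)
    (hγ : γ = ⁅a, ℓ⁆) (hℓ : ℓ = ⁅g * γ * g⁻¹, b⁆) :
    γ ∈ derivedSeries G (k + 1) := by
  have key : ∀ m : ℕ, m ≤ k + 1 → γ ∈ derivedSeries G m := by
    intro m
    induction m with
    | zero => intro _; exact Subgroup.mem_top γ
    | succ n ih =>
      intro hn
      have hγn : γ ∈ derivedSeries G n := ih (Nat.le_of_succ_le hn)
      have hbn : b ∈ derivedSeries G n := by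
        have step : ∀ p : ℕ, derivedSeries G (p + 1) ≤ derivedSeries G p := fun p => by
          have := derivedSeries_normal G p
          rw [derivedSeries_succ]
          exact Subgroup.commutator_le_left _ _
        have mono : ∀ p q : ℕ, p ≤ q → derivedSeries G q ≤ derivedSeries G p := by
          intro p q h
          induction h with
          | refl => exact le_rfl
          | step _ ih => exact le_trans (step _) ih
        exact mono n k (Nat.succ_le_succ_iff.mp hn) hb
      have hnorm := derivedSeries_normal G n
      have hconj : g * γ * g⁻¹ ∈ derivedSeries G n := hnorm.conj_mem γ hγn g
      have hℓn : ℓ ∈ derivedSeries G (n + 1) := by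
        rw [hℓ, derivedSeries_succ]
        exact Subgroup.commutator_mem_commutator hconj hbn
      have hnorm' := derivedSeries_normal G (n + 1)
      rw [hγ]
      have : ⁅a, ℓ⁆ = (a * ℓ * a⁻¹) * ℓ⁻¹ := by group
      rw [this]
      exact mul_mem (hnorm'.conj_mem ℓ hℓn a) (inv_mem hℓn)
  exact key (k + 1) le_rfl
end

section
/- Let B = ℤ[t]/(t³ + t − 1), regarded as a ℤ-module (free of rank 3 with basis 1, t, t²), and let T : B → B be the ℤ-linear endomorphism given by multiplication by t. Then the endomorphism Λ²T − id of the second exterior power ⋀² B is injective, and the endomorphism Λ³T of the third exterior power ⋀³ B is the identity. -/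
open Polynomial

set_option maxHeartbeats 1000000
set_option synthInstance.maxHeartbeats 200000

/-- A linear endomorphism maps the `n`-th exterior power into itself (under the induced
algebra endomorphism of the exterior algebra). -/
theorem exteriorAlgebra_map_mem_exteriorPower {R M : Type*} [CommRing R] [AddCommGroup M]
    [Module R M] (f : M →ₗ[R] M) (n : ℕ) :
    ∀ x ∈ ⋀[R]^n M, ExteriorAlgebra.map f x ∈ ⋀[R]^n M := by
  have hι : Submodule.map (ExteriorAlgebra.map f).toLinearMap
      (LinearMap.range (ExteriorAlgebra.ι R : M →ₗ[R] ExteriorAlgebra R M)) ≤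
      LinearMap.range (ExteriorAlgebra.ι R : M →ₗ[R] ExteriorAlgebra R M) := by
    rintro y ⟨z, ⟨m, rfl⟩, rfl⟩
    exact ⟨f m, (ExteriorAlgebra.map_apply_ι f m).symm⟩
  have key : ∀ k : ℕ, Submodule.map (ExteriorAlgebra.map f).toLinearMap
      ((LinearMap.range (ExteriorAlgebra.ι R : M →ₗ[R] ExteriorAlgebra R M)) ^ k) ≤
      (LinearMap.range (ExteriorAlgebra.ι R : M →ₗ[R] ExteriorAlgebra R M)) ^ k := by
    intro k
    induction k with
    | zero => simpa [pow_zero] using le_of_eq (Submodule.map_one (ExteriorAlgebra.map f))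
    | succ k ih =>
        rw [pow_succ, Submodule.map_mul]
        exact mul_le_mul' ih hι
  intro x hx
  exact key n ⟨x, hx, rfl⟩

/-- The endomorphism of the `n`-th exterior power `⋀[R]^n M` induced by a linear endomorphism
of `M`. -/
noncomputable def exteriorPowerMap {R M : Type*} [CommRing R] [AddCommGroup M] [Module R M]
    (n : ℕ) (f : M →ₗ[R] M) : ⋀[R]^n M →ₗ[R] ⋀[R]^n M :=
  (ExteriorAlgebra.map f).toLinearMap.restrict
    (fun x hx => exteriorAlgebra_map_mem_exteriorPower f n x hx)

/-- `B = ℤ[t]/(t³ + t − 1)`. -/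
abbrev KnotModuleB : Type :=
  AdjoinRoot ((X : ℤ[X]) ^ 3 + X - 1)

/-- Multiplication by `t` on `B`, as a `ℤ`-linear endomorphism. -/
noncomputable def knotModuleT : KnotModuleB →ₗ[ℤ] KnotModuleB :=
  LinearMap.mulLeft ℤ (AdjoinRoot.root ((X : ℤ[X]) ^ 3 + X - 1))

/-! ### Auxiliary material -/

noncomputable section KnotAux

namespace KnotAux

open ExteriorAlgebra

abbrev pB : ℤ[X] := (X : ℤ[X]) ^ 3 + X - 1

lemma pB_natDegree : pB.natDegree = 3 := by
  unfold pB; compute_degree!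

lemma pB_monic : pB.Monic := by
  unfold pB Polynomial.Monic; monicity!

abbrev rB : KnotModuleB := AdjoinRoot.root pB

lemma rB_cube : rB ^ 3 = 1 - rB := by
  have h : AdjoinRoot.mk pB pB = 0 := AdjoinRoot.mk_self
  have h2 : rB ^ 3 + rB - 1 = 0 := by
    simpa only [map_sub, map_add, map_pow, AdjoinRoot.mk_X, map_one] using h
  linear_combination h2

/-- The basis `1, t, t²` of `B` over `ℤ`. -/
def bB : Module.Basis (Fin 3) ℤ KnotModuleB :=
  ((AdjoinRoot.powerBasis' pB_monic).basis).reindex (finCongr pB_natDegree)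

lemma bB_apply (i : Fin 3) : bB i = rB ^ (i : ℕ) := by
  rw [bB, Module.Basis.reindex_apply, PowerBasis.basis_eq_pow]
  simp [AdjoinRoot.powerBasis'_gen, Fin.coe_cast]
  rfl

lemma T_apply (x : KnotModuleB) : knotModuleT x = rB * x := rfl

lemma T_b0 : knotModuleT (bB 0) = bB 1 := by
  rw [T_apply, bB_apply, bB_apply, show ((0 : Fin 3) : ℕ) = 0 from rfl,
    show ((1 : Fin 3) : ℕ) = 1 from rfl]
  ring

lemma T_b1 : knotModuleT (bB 1) = bB 2 := by
  rw [T_apply, bB_apply, bB_apply, show ((1 : Fin 3) : ℕ) = 1 from rfl,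
    show ((2 : Fin 3) : ℕ) = 2 from rfl]
  ring

lemma T_b2 : knotModuleT (bB 2) = bB 0 - bB 1 := by
  rw [T_apply, bB_apply, bB_apply, bB_apply, show ((0 : Fin 3) : ℕ) = 0 from rfl,
    show ((1 : Fin 3) : ℕ) = 1 from rfl, show ((2 : Fin 3) : ℕ) = 2 from rfl]
  linear_combination rB_cube

lemma ι_anticomm (x y : KnotModuleB) :
    ι ℤ y * ι ℤ x = -(ι ℤ x * ι ℤ y) := by
  have h := ι_sq_zero (R := ℤ) (x + y)
  rw [map_add, add_mul, mul_add, mul_add, ι_sq_zero, ι_sq_zero] at h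
  have h' : ι ℤ x * ι ℤ y + ι ℤ y * ι ℤ x = 0 := by
    rw [← h]; abel
  exact eq_neg_of_add_eq_zero_right h'

lemma ιMulti_two (v : Fin 2 → KnotModuleB) :
    ιMulti ℤ 2 v = ι ℤ (v 0) * ι ℤ (v 1) := by
  simp [ιMulti_apply, List.ofFn_succ, Matrix.vecTail, Function.comp, Fin.succ_zero_eq_one]

lemma ιMulti_three (v : Fin 3 → KnotModuleB) :
    ιMulti ℤ 3 v = ι ℤ (v 0) * (ι ℤ (v 1) * ι ℤ (v 2)) := by
  simp [ιMulti_apply, List.ofFn_succ, mul_assoc, Matrix.vecTail, Function.comp,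
    Fin.succ_zero_eq_one, Fin.succ_one_eq_two]

/-- Generators of `⋀² B`. -/
def gens : Fin 3 → ExteriorAlgebra ℤ KnotModuleB :=
  ![ι ℤ (bB 0) * ι ℤ (bB 1), ι ℤ (bB 0) * ι ℤ (bB 2), ι ℤ (bB 1) * ι ℤ (bB 2)]

lemma prod_mem_span (x y : KnotModuleB) :
    ι ℤ x * ι ℤ y ∈ Submodule.span ℤ (Set.range gens) := by
  have hx := bB.sum_repr x
  have hy := bB.sum_repr y
  rw [← hx, ← hy]
  rw [map_sum, map_sum, Finset.sum_mul]
  refine Submodule.sum_mem _ fun i _ => ?_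
  rw [Finset.mul_sum]
  refine Submodule.sum_mem _ fun j _ => ?_
  rw [map_smul, map_smul, smul_mul_assoc, mul_smul_comm]
  refine Submodule.smul_mem _ _ (Submodule.smul_mem _ _ ?_)
  fin_cases i <;> fin_cases j
  · rw [ι_sq_zero]; exact Submodule.zero_mem _
  · exact Submodule.subset_span ⟨0, by simp [gens]⟩
  · exact Submodule.subset_span ⟨1, by simp [gens]⟩
  · rw [ι_anticomm]
    exact Submodule.neg_mem _ (Submodule.subset_span ⟨0, by simp [gens]⟩)
  · rw [ι_sq_zero]; exact Submodule.zero_mem _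
  · exact Submodule.subset_span ⟨2, by simp [gens]⟩
  · rw [ι_anticomm]
    exact Submodule.neg_mem _ (Submodule.subset_span ⟨1, by simp [gens]⟩)
  · rw [ι_anticomm]
    exact Submodule.neg_mem _ (Submodule.subset_span ⟨2, by simp [gens]⟩)
  · rw [ι_sq_zero]; exact Submodule.zero_mem _

lemma exteriorPower_two_le :
    ⋀[ℤ]^2 KnotModuleB ≤ Submodule.span ℤ (Set.range gens) := by
  rw [← ιMulti_span_fixedDegree]
  refine Submodule.span_le.2 ?_
  rintro _ ⟨v, rfl⟩
  rw [ιMulti_two]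
  exact prod_mem_span _ _

/-- Coordinate functionals on `⋀² B`. -/
def FF (i j : Fin 3) : ExteriorAlgebra ℤ KnotModuleB →ₗ[ℤ] ℤ :=
  liftAlternating (Pi.single 2
    ((Matrix.detRowAlternating).compLinearMap (LinearMap.pi ![bB.coord i, bB.coord j])))

lemma FF_apply (i j : Fin 3) (x y : KnotModuleB) :
    FF i j (ι ℤ x * ι ℤ y) =
      bB.coord i x * bB.coord j y - bB.coord j x * bB.coord i y := by
  have h : ι ℤ x * ι ℤ y = ιMulti ℤ 2 ![x, y] := by
    rw [ιMulti_two]; simp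
  have det2 : ∀ f : Fin 2 → Fin 2 → ℤ,
      Matrix.detRowAlternating f = f 0 0 * f 1 1 - f 0 1 * f 1 0 := fun f =>
    Matrix.det_fin_two (Matrix.of f)
  rw [h, FF, liftAlternating_apply_ιMulti, Pi.single_eq_same,
    AlternatingMap.compLinearMap_apply, det2]
  simp [Module.Basis.coord_apply]

lemma coord_b (i j : Fin 3) : bB.coord i (bB j) = if j = i then 1 else 0 := by
  simp [Module.Basis.coord_apply, Module.Basis.repr_self, Finsupp.single_apply]

lemma FF01_g0 : FF 0 1 (gens 0) = 1 := by simp [gens, FF_apply, coord_b]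
lemma FF01_g1 : FF 0 1 (gens 1) = 0 := by simp [gens, FF_apply, coord_b]
lemma FF01_g2 : FF 0 1 (gens 2) = 0 := by simp [gens, FF_apply, coord_b]
lemma FF02_g0 : FF 0 2 (gens 0) = 0 := by simp [gens, FF_apply, coord_b]
lemma FF02_g1 : FF 0 2 (gens 1) = 1 := by simp [gens, FF_apply, coord_b]
lemma FF02_g2 : FF 0 2 (gens 2) = 0 := by simp [gens, FF_apply, coord_b]
lemma FF12_g0 : FF 1 2 (gens 0) = 0 := by simp [gens, FF_apply, coord_b]
lemma FF12_g1 : FF 1 2 (gens 1) = 0 := by simp [gens, FF_apply, coord_b]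
lemma FF12_g2 : FF 1 2 (gens 2) = 1 := by simp [gens, FF_apply, coord_b]

lemma mapT_gens0 : ExteriorAlgebra.map knotModuleT (gens 0) = gens 2 := by
  simp only [gens, Matrix.cons_val_zero, Matrix.cons_val_two, Matrix.tail_cons,
    Matrix.head_cons, map_mul, map_apply_ι, T_b0, T_b1]

lemma mapT_gens1 : ExteriorAlgebra.map knotModuleT (gens 1) = -(gens 0) := by
  have h : ExteriorAlgebra.map knotModuleT (gens 1) = ι ℤ (bB 1) * ι ℤ (bB 0 - bB 1) := by
    simp only [gens, Matrix.cons_val_one, Matrix.head_cons, Matrix.cons_val_two,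
      Matrix.tail_cons, Matrix.cons_val_zero, map_mul, map_apply_ι, T_b0, T_b2]
  rw [h, map_sub, mul_sub, ι_sq_zero, sub_zero, ι_anticomm]
  simp [gens]

lemma mapT_gens2 : ExteriorAlgebra.map knotModuleT (gens 2) = -(gens 1) + gens 2 := by
  have h : ExteriorAlgebra.map knotModuleT (gens 2) = ι ℤ (bB 2) * ι ℤ (bB 0 - bB 1) := by
    simp only [gens, Matrix.cons_val_one, Matrix.head_cons, Matrix.cons_val_two,
      Matrix.tail_cons, map_mul, map_apply_ι, T_b1, T_b2]
  rw [h, map_sub, mul_sub, ι_anticomm (bB 0) (bB 2), ι_anticomm (bB 1) (bB 2)]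
  simp [gens]

/-- The base computation for `Λ³T`. -/
lemma base3 :
    ιMulti ℤ 3 (fun i => knotModuleT (bB i)) = ιMulti ℤ 3 (fun i => bB i) := by
  rw [ιMulti_three, ιMulti_three]
  rw [T_b0, T_b1, T_b2]
  rw [map_sub, mul_sub, mul_sub]
  rw [ι_anticomm (bB 0) (bB 2), ι_anticomm (bB 1) (bB 2)]
  rw [mul_neg, mul_neg, sub_neg_eq_add, ← mul_assoc (ι ℤ (bB 1)) (ι ℤ (bB 1)), ι_sq_zero,
    zero_mul, add_zero, ← mul_assoc, ι_anticomm (bB 0) (bB 1), neg_mul, neg_neg, mul_assoc]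

lemma alternating_eq :
    (ExteriorAlgebra.map knotModuleT).toLinearMap.compAlternatingMap
      (ιMulti ℤ 3 (M := KnotModuleB)) = ιMulti ℤ 3 := by
  apply Module.Basis.ext_alternating bB
  intro w hw
  let σ : Equiv.Perm (Fin 3) := Equiv.ofBijective w (Finite.injective_iff_bijective.mp hw)
  have hcomp : (fun i => bB (w i)) = (fun i => bB i) ∘ σ := by
    funext i; simp [σ, Equiv.ofBijective]
  rw [hcomp, AlternatingMap.map_perm, AlternatingMap.map_perm]
  congr 1
  rw [LinearMap.compAlternatingMap_apply, AlgHom.toLinearMap_apply, map_apply_ιMulti]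
  exact base3

lemma map_id_on_three :
    ∀ x ∈ ⋀[ℤ]^3 KnotModuleB, ExteriorAlgebra.map knotModuleT x = x := by
  intro x hx
  rw [← ιMulti_span_fixedDegree] at hx
  induction hx using Submodule.span_induction with
  | mem x h =>
      obtain ⟨v, rfl⟩ := h
      have := DFunLike.congr_fun alternating_eq v
      exact this
  | zero => simp
  | add x y hx hy ihx ihy => rw [map_add, ihx, ihy]
  | smul a x hx ihx => rw [map_smul, ihx]

end KnotAux

end KnotAux


open ExteriorAlgebra KnotAux in
/-- For `B = ℤ[t]/(t³ + t − 1)` and `T` multiplication by `t`, the endomorphism `Λ²T − id` of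
`⋀² B` is injective and `Λ³T` is the identity of `⋀³ B`. -/
theorem extPower_knotModule :
    Function.Injective (exteriorPowerMap 2 knotModuleT -
      (LinearMap.id : ⋀[ℤ]^2 KnotModuleB →ₗ[ℤ] ⋀[ℤ]^2 KnotModuleB)) ∧
    exteriorPowerMap 3 knotModuleT =
      (LinearMap.id : ⋀[ℤ]^3 KnotModuleB →ₗ[ℤ] ⋀[ℤ]^3 KnotModuleB) := by
  constructor
  · -- injectivity of Λ²T − id
    rw [← LinearMap.ker_eq_bot, LinearMap.ker_eq_bot']
    intro z hz
    have hz' : ExteriorAlgebra.map knotModuleT (z : ExteriorAlgebra ℤ KnotModuleB)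
        - (z : ExteriorAlgebra ℤ KnotModuleB) = 0 := by
      have h := congrArg (Subtype.val) hz
      exact h
    obtain ⟨c, hc⟩ := (Submodule.mem_span_range_iff_exists_fun ℤ).mp
      (exteriorPower_two_le z.2)
    rw [← hc] at hz'
    have hz2 : (-(c 0) - c 1) • gens 0 + (-(c 1) - c 2) • gens 1 + (c 0) • gens 2 = 0 := by
      rw [← hz']
      simp only [Fin.sum_univ_three, map_add, map_smul, mapT_gens0, mapT_gens1, mapT_gens2]
      module
    have e01 := congrArg (FF 0 1) hz2
    have e02 := congrArg (FF 0 2) hz2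
    have e12 := congrArg (FF 1 2) hz2
    simp only [map_add, map_smul, map_zero, FF01_g0, FF01_g1, FF01_g2, FF02_g0, FF02_g1,
      FF02_g2, FF12_g0, FF12_g1, FF12_g2, smul_eq_mul, mul_one, mul_zero, add_zero,
      zero_add] at e01 e02 e12
    have hc0 : c 0 = 0 := by omega
    have hc1 : c 1 = 0 := by omega
    have hc2 : c 2 = 0 := by omega
    have hzv : (z : ExteriorAlgebra ℤ KnotModuleB) = 0 := by
      rw [← hc, Fin.sum_univ_three, hc0, hc1, hc2]
      simp
    exact Subtype.ext hzv
  · -- Λ³T = id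
    apply LinearMap.ext
    intro x
    apply Subtype.ext
    have hval : ((exteriorPowerMap 3 knotModuleT x : ⋀[ℤ]^3 KnotModuleB) :
        ExteriorAlgebra ℤ KnotModuleB) = ExteriorAlgebra.map knotModuleT (x :
        ExteriorAlgebra ℤ KnotModuleB) := rfl
    rw [hval]
    exact map_id_on_three _ x.2
end
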